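/- Let G ↪ X and H ↪ Y be continuous actions of countable groups on compact metrizable spaces, and suppose the product action G × H ↪ X × Y has the small boundary property. Then either H ↪ Y has the small boundary property or every G-invariant Borel probability measure on X is atomless. -/

import Mathlib

open MeasureTheory Topology

/-- A measure is invariant for the action of `G`. -/
def IsInvariantMeasure (G : Type*) {X : Type*} [Group G] [MulAction G X]
    [MeasurableSpace X] (μ : Measure X) : Prop :=
  ∀ g : G, Measure.map (fun x : X => g • x) μ = μ

/-- The small boundary property for the action of `G` on `X`: there is a basis of open
sets whose boundaries are null for every `G`-invariant Borel probability measure. -/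
def ActionSBP (G X : Type*) [Group G] [MulAction G X] [TopologicalSpace X]
    [MeasurableSpace X] : Prop :=
  ∃ B : Set (Set X), TopologicalSpace.IsTopologicalBasis B ∧
    ∀ U ∈ B, ∀ μ : ProbabilityMeasure X, IsInvariantMeasure G (μ : Measure X) →
      (μ : Measure X) (frontier U) = 0

/-- The small boundary property for the product action of `G × H` on `X × Y`. -/
def ProdActionSBP (G H X Y : Type*) [Group G] [Group H] [MulAction G X] [MulAction H Y]
    [TopologicalSpace X] [TopologicalSpace Y] [MeasurableSpace X] [MeasurableSpace Y] : Prop :=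
  ∃ B : Set (Set (X × Y)), TopologicalSpace.IsTopologicalBasis B ∧
    ∀ U ∈ B, ∀ μ : ProbabilityMeasure (X × Y),
      (∀ (g : G) (h : H),
        Measure.map (fun p : X × Y => (g • p.1, h • p.2)) (μ : Measure (X × Y)) =
          (μ : Measure (X × Y))) →
      (μ : Measure (X × Y)) (frontier U) = 0

theorem secondCountable_of_compact_metrizable (Z : Type*) [TopologicalSpace Z]
    [CompactSpace Z] [TopologicalSpace.MetrizableSpace Z] :
    SecondCountableTopology Z := by
  letI : MetricSpace Z := TopologicalSpace.metrizableSpaceMetric Z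
  infer_instance

theorem prod_sbp_implies_factor_sbp_or_atomless {G H X Y : Type*}
    [Group G] [Countable G] [Group H] [Countable H]
    [TopologicalSpace X] [CompactSpace X] [TopologicalSpace.MetrizableSpace X]
    [TopologicalSpace Y] [CompactSpace Y] [TopologicalSpace.MetrizableSpace Y]
    [MeasurableSpace X] [BorelSpace X] [MeasurableSpace Y] [BorelSpace Y]
    [MulAction G X] [ContinuousConstSMul G X]
    [MulAction H Y] [ContinuousConstSMul H Y]
    (hprod : ProdActionSBP G H X Y) :
    ActionSBP H Y ∨
      ∀ μ : ProbabilityMeasure X, IsInvariantMeasure G (μ : Measure X) →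
        ∀ x : X, (μ : Measure X) {x} = 0 := by
  classical
  haveI : SecondCountableTopology X := secondCountable_of_compact_metrizable X
  haveI : SecondCountableTopology Y := secondCountable_of_compact_metrizable Y
  by_cases hY : ActionSBP H Y
  · exact Or.inl hY
  right
  intro μ hμ x
  by_contra hx
  apply hY
  obtain ⟨B, hB, hBnull⟩ := hprod
  refine ⟨{V | ∃ U ∈ B, V = Prod.mk x ⁻¹' U}, ?_, ?_⟩
  · apply TopologicalSpace.isTopologicalBasis_of_isOpen_of_nhds
    · rintro V ⟨U, hU, rfl⟩
      exact (hB.isOpen hU).preimage (Continuous.prodMk_right x)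
    · intro y V hyV hV
      obtain ⟨U, hU, hxyU, hUsub⟩ := hB.exists_subset_of_mem_open
        (show (x, y) ∈ (Set.univ ×ˢ V) from ⟨trivial, hyV⟩) (isOpen_univ.prod hV)
      exact ⟨Prod.mk x ⁻¹' U, ⟨U, hU, rfl⟩, hxyU, fun z hz => (hUsub hz).2⟩
  · rintro V ⟨U, hU, rfl⟩ ν hν
    set π : ProbabilityMeasure (X × Y) := ⟨(μ : Measure X).prod (ν : Measure Y), inferInstance⟩
    have hπinv : ∀ (g : G) (h : H),
        Measure.map (fun p : X × Y => (g • p.1, h • p.2)) (π : Measure (X × Y)) =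
          (π : Measure (X × Y)) := by
      intro g h
      have heq : (fun p : X × Y => (g • p.1, h • p.2)) =
          Prod.map (fun a : X => g • a) (fun b : Y => h • b) := rfl
      have hmg : Measurable (fun a : X => g • a) :=
        (continuous_const_smul g).measurable
      have hmh : Measurable (fun b : Y => h • b) :=
        (continuous_const_smul h).measurable
      show Measure.map _ ((μ : Measure X).prod (ν : Measure Y)) = _
      rw [heq, ← Measure.map_prod_map _ _ hmg hmh, hμ g, hν h]
      rfl
    have h0 : (π : Measure (X × Y)) (frontier U) = 0 := hBnull U hU π hπinv
    have hsub : {x} ×ˢ (Prod.mk x ⁻¹' frontier U) ⊆ frontier U := by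
      rintro ⟨a, b⟩ ⟨ha, hb⟩
      simp only [Set.mem_singleton_iff] at ha
      subst ha
      exact hb
    have hmul : (μ : Measure X) {x} * (ν : Measure Y) (Prod.mk x ⁻¹' frontier U) = 0 := by
      have hle : (μ : Measure X) {x} * (ν : Measure Y) (Prod.mk x ⁻¹' frontier U) ≤
          (π : Measure (X × Y)) (frontier U) := by
        rw [show (π : Measure (X × Y)) = (μ : Measure X).prod (ν : Measure Y) from rfl,
          ← Measure.prod_prod]
        exact measure_mono hsub
      exact le_antisymm (h0 ▸ hle) zero_le
    have hν0 : (ν : Measure Y) (Prod.mk x ⁻¹' frontier U) = 0 := by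
      rcases mul_eq_zero.mp hmul with h | h
      · exact absurd h hx
      · exact h
    exact measure_mono_null ((Continuous.prodMk_right x).frontier_preimage_subset U) hν0
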